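/- Let 𝒢 be a hyperbolic second countable Hausdorff étale groupoid with generating set S and length function l_S, μ an invariant Radon probability measure on 𝒢⁽⁰⁾, α ∈ (0,1) and p ∈ [1,∞). If the positive definite function φ_α(x) = α^{l_S(x)} belongs to ℒ^p_μ(𝒢), then the GNS representation of 𝒢 associated to φ_α is an ℒ^p_μ(𝒢)-representation. -/

import Mathlib

open scoped BigOperators ComplexConjugate ENNReal NNReal
open MeasureTheory Filter Topology

noncomputable section

instance : Fact ((1 : ℝ≥0∞) ≤ 2) := ⟨one_le_two⟩

/-- The ambient separable Hilbert space `ℓ²(ℕ, ℂ)`, in which the fibres of any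
Borel Hilbert bundle with a fundamental sequence may be realized. -/
abbrev Hamb : Type := lp (fun _ : ℕ => ℂ) 2

instance : MeasurableSpace Hamb := borel _
instance : BorelSpace Hamb := ⟨rfl⟩

/-- A bounded complex-valued function. -/
def BddFun {X : Type} (f : X → ℂ) : Prop := ∃ M : ℝ, ∀ x, ‖f x‖ ≤ M

/-- A (second countable locally compact Hausdorff) étale groupoid: a groupoid structure
on `G` (with total operations, the product being meaningful on composable pairs
`s x = r y`), such that inversion and multiplication are continuous and the range map
is a local homeomorphism.  The standing topological assumptions (Hausdorff, second
countable, locally compact) are imposed as typeclass assumptions in the theorems. -/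
structure EtaleGroupoid (G : Type) [TopologicalSpace G] where
  mul : G → G → G
  inv : G → G
  r : G → G
  s : G → G
  r_def : ∀ x, r x = mul x (inv x)
  s_def : ∀ x, s x = mul (inv x) x
  inv_inv : ∀ x, inv (inv x) = x
  s_inv : ∀ x, s (inv x) = r x
  mul_assoc' : ∀ x y z, s x = r y → s y = r z → mul (mul x y) z = mul x (mul y z)
  r_mul : ∀ x y, s x = r y → r (mul x y) = r x
  s_mul : ∀ x y, s x = r y → s (mul x y) = s y
  inv_mul_cancel' : ∀ x y, s x = r y → mul (inv x) (mul x y) = y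
  mul_inv_cancel' : ∀ x y, s x = r y → mul (mul x y) (inv y) = x
  continuous_inv : Continuous inv
  continuous_r : Continuous r
  continuous_s : Continuous s
  continuous_mul : ∀ x y : G, s x = r y → ∀ W : Set G, IsOpen W → mul x y ∈ W →
    ∃ U V : Set G, IsOpen U ∧ IsOpen V ∧ x ∈ U ∧ y ∈ V ∧
      ∀ x' ∈ U, ∀ y' ∈ V, s x' = r y' → mul x' y' ∈ W
  etale : ∀ x : G, ∃ U : Set G, IsOpen U ∧ x ∈ U ∧ Set.InjOn r U ∧
    ∀ V : Set G, V ⊆ U → IsOpen V → IsOpen (r '' V)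

namespace EtaleGroupoid

variable {G : Type} [TopologicalSpace G] [MeasurableSpace G]

/-- The unit space `𝒢⁽⁰⁾`. -/
def units (g : EtaleGroupoid G) : Set G := Set.range g.r

/-- The range fibre `𝒢^u = r⁻¹(u)`. -/
def rFiber (g : EtaleGroupoid G) (u : G) : Set G := {x | g.r x = u}

/-- The source fibre `𝒢_u = s⁻¹(u)`. -/
def sFiber (g : EtaleGroupoid G) (u : G) : Set G := {x | g.s x = u}

/-- Membership in `C_c(𝒢)`: continuous with compact support. -/
def IsCc (_g : EtaleGroupoid G) (f : G → ℂ) : Prop := Continuous f ∧ HasCompactSupport f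

/-- Convolution: `(f * h)(x) = Σ_{y ∈ 𝒢^{r(x)}} f(y) h(y⁻¹ x)`. -/
def conv (g : EtaleGroupoid G) (f h : G → ℂ) : G → ℂ :=
  fun x => ∑' y : g.rFiber (g.r x), f (y : G) * h (g.mul (g.inv (y : G)) x)

/-- The involution `f^*(x) = conj (f (x⁻¹))`. -/
def star' (g : EtaleGroupoid G) (f : G → ℂ) : G → ℂ := fun x => conj (f (g.inv x))

/-- Iterated convolution powers: `convIter g h n = h^{*(n+1)}`. -/
def convIter (g : EtaleGroupoid G) (h : G → ℂ) : ℕ → G → ℂ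
  | 0 => h
  | n + 1 => g.conv (convIter g h n) h

/-- `B(𝒢)`: bounded Borel functions. -/
def BG (_g : EtaleGroupoid G) : Set (G → ℂ) := {f | Measurable f ∧ BddFun f}

/-- `B_c(𝒢)`: compactly supported bounded Borel functions. -/
def Bc (_g : EtaleGroupoid G) : Set (G → ℂ) :=
  {f | Measurable f ∧ BddFun f ∧ HasCompactSupport f}

/-- `B_{0,l}(𝒢)`: bounded Borel functions which are locally `B₀`, i.e. whose
restriction to `𝒢(K)` vanishes at infinity for every compact `K ⊆ 𝒢⁽⁰⁾`. -/
def B0l (g : EtaleGroupoid G) : Set (G → ℂ) :=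
  {f | Measurable f ∧ BddFun f ∧
    ∀ K : Set G, K ⊆ g.units → IsCompact K → ∀ ε : ℝ, 0 < ε →
      ∃ C : Set G, IsCompact C ∧ ∀ x : G, g.r x ∈ K → g.s x ∈ K → x ∉ C → ‖f x‖ < ε}

/-- An algebraic ideal `D ⊴ B(𝒢)`. -/
structure IsBorelIdeal (g : EtaleGroupoid G) (D : Set (G → ℂ)) : Prop where
  subset_BG : D ⊆ g.BG
  add_mem : ∀ f ∈ D, ∀ h ∈ D, f + h ∈ D
  smul_mem : ∀ f ∈ D, ∀ c : ℂ, c • f ∈ D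
  mul_mem : ∀ f ∈ D, ∀ h ∈ g.BG, h * f ∈ D

/-- A positive definite function on the groupoid. -/
def IsPosDef (g : EtaleGroupoid G) (F : G → ℂ) : Prop :=
  ∀ u ∈ g.units, ∀ n : ℕ, ∀ x : Fin n → G, (∀ i, x i ∈ g.rFiber u) → ∀ c : Fin n → ℂ,
    0 ≤ (∑ i, ∑ j, conj (c i) * c j * F (g.mul (g.inv (x i)) (x j))).re ∧
    (∑ i, ∑ j, conj (c i) * c j * F (g.mul (g.inv (x i)) (x j))).im = 0

/-- A function is locally `C₀` (in norm) : restriction to `𝒢(K)` vanishes at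
infinity for every compact `K ⊆ 𝒢⁽⁰⁾`. -/
def IsLocallyC0 (g : EtaleGroupoid G) (F : G → ℂ) : Prop :=
  ∀ K : Set G, K ⊆ g.units → IsCompact K → ∀ ε : ℝ, 0 < ε →
    ∃ C : Set G, IsCompact C ∧ ∀ x : G, g.r x ∈ K → g.s x ∈ K → x ∉ C → ‖F x‖ < ε

/-- The Haagerup property for an étale groupoid. -/
def HaagerupProperty (g : EtaleGroupoid G) : Prop :=
  ∃ F : ℕ → G → ℂ, (∀ n, Continuous (F n)) ∧ (∀ n, g.IsPosDef (F n)) ∧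
    (∀ n, ∀ u ∈ g.units, F n u = 1) ∧
    (∀ K : Set G, IsCompact K → ∀ ε : ℝ, 0 < ε →
      ∃ N : ℕ, ∀ n : ℕ, N ≤ n → ∀ x ∈ K, ‖F n x - 1‖ < ε) ∧
    (∀ n, Continuous (F n) ∧ g.IsLocallyC0 (F n))

/-- The lower integral of `F` against the induced measure `ν`:
`∫ F dν = ∫_{𝒢⁽⁰⁾} Σ_{x ∈ 𝒢^u} F(x) dμ(u)`. -/
def fiberL (g : EtaleGroupoid G) (μ : Measure G) (F : G → ℝ≥0∞) : ℝ≥0∞ :=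
  ∫⁻ u, ∑' x : g.rFiber u, F (x : G) ∂μ

/-- The lower integral of `F` against `ν⁻¹` (source fibres). -/
def fiberLs (g : EtaleGroupoid G) (μ : Measure G) (F : G → ℝ≥0∞) : ℝ≥0∞ :=
  ∫⁻ u, ∑' x : g.sFiber u, F (x : G) ∂μ

/-- The induced measure `ν` of a set. -/
def nu (g : EtaleGroupoid G) (μ : Measure G) (E : Set G) : ℝ≥0∞ :=
  g.fiberL μ (E.indicator 1)

/-- `μ` is a quasi-invariant probability measure on the unit space: the induced
measure `ν` and its image `ν⁻¹` under inversion are mutually absolutely continuous. -/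
def IsQuasiInvariant (g : EtaleGroupoid G) (μ : Measure G) : Prop :=
  IsProbabilityMeasure μ ∧ μ g.unitsᶜ = 0 ∧
    ∀ E : Set G, MeasurableSet E → (g.nu μ E = 0 ↔ g.nu μ (g.inv ⁻¹' E) = 0)

/-- `μ` is an invariant probability measure on the unit space: `ν = ν⁻¹`. -/
def IsInvariant (g : EtaleGroupoid G) (μ : Measure G) : Prop :=
  IsProbabilityMeasure μ ∧ μ g.unitsᶜ = 0 ∧
    ∀ E : Set G, MeasurableSet E → g.nu μ E = g.nu μ (g.inv ⁻¹' E)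

/-- A modular function (Radon–Nikodym derivative `Δ = dν/dν⁻¹`), chosen to be a
Borel homomorphism. -/
structure IsModular (g : EtaleGroupoid G) (μ : Measure G) (Δ : G → ℝ) : Prop where
  meas : Measurable Δ
  pos : ∀ x, 0 < Δ x
  hom : ∀ x y, g.s x = g.r y → Δ (g.mul x y) = Δ x * Δ y
  inv_eq : ∀ x, Δ (g.inv x) = (Δ x)⁻¹
  rn : ∀ F : G → ℝ≥0∞, Measurable F →
    g.fiberL μ F = g.fiberLs μ fun x => F x * ENNReal.ofReal (Δ x)

end EtaleGroupoid

/-- A unitary representation of the groupoid on a Borel Hilbert bundle.  The fibres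
are realized as (closed) subspaces of an ambient Hilbert space `E`; `op x` is a
unitary `H(s x) → H(r x)`, the assignment is a Borel homomorphism (Borel-ness being
expressed through the matrix coefficients of a fundamental sequence of Borel
sections of the bundle). -/
structure GRep {G : Type} [TopologicalSpace G] [MeasurableSpace G] (g : EtaleGroupoid G)
    (E : Type) [NormedAddCommGroup E] [InnerProductSpace ℂ E] [MeasurableSpace E] where
  fib : G → Submodule ℂ E
  op : G → E → E
  mapsTo : ∀ x : G, ∀ v ∈ fib (g.s x), op x v ∈ fib (g.r x)
  map_add : ∀ x : G, ∀ v ∈ fib (g.s x), ∀ w ∈ fib (g.s x), op x (v + w) = op x v + op x w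
  map_smul : ∀ x : G, ∀ c : ℂ, ∀ v ∈ fib (g.s x), op x (c • v) = c • op x v
  inner_op : ∀ x : G, ∀ v ∈ fib (g.s x), ∀ w ∈ fib (g.s x),
    (inner ℂ (op x v) (op x w) : ℂ) = (inner ℂ v w : ℂ)
  surj' : ∀ x : G, ∀ w ∈ fib (g.r x), ∃ v ∈ fib (g.s x), op x v = w
  mul_op : ∀ x y : G, g.s x = g.r y → ∀ v ∈ fib (g.s y), op (g.mul x y) v = op x (op y v)
  unit_op : ∀ u ∈ g.units, ∀ v ∈ fib u, op u v = v
  fundSeq : ℕ → G → E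
  fundSeq_mem : ∀ n : ℕ, ∀ u ∈ g.units, fundSeq n u ∈ fib u
  fundSeq_meas : ∀ n : ℕ, Measurable (fundSeq n)
  fundSeq_dense : ∀ u ∈ g.units, ∀ v ∈ fib u, ∀ ε : ℝ, 0 < ε →
    ∃ w ∈ Submodule.span ℂ (Set.range fun n => fundSeq n u), ‖v - w‖ < ε
  fund_coeff_meas : ∀ n m : ℕ,
    Measurable fun x : G => (inner ℂ (fundSeq m (g.r x)) (op x (fundSeq n (g.s x))) : ℂ)

namespace GRep

variable {G : Type} [TopologicalSpace G] [MeasurableSpace G] {g : EtaleGroupoid G}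
variable {E : Type} [NormedAddCommGroup E] [InnerProductSpace ℂ E] [MeasurableSpace E]

/-- The matrix coefficient `x ↦ ⟨π(x) ξ(s x), η(r x)⟩` (linear in `ξ`). -/
def coeff (π : GRep g E) (ξ η : G → E) : G → ℂ :=
  fun x => (inner ℂ (η (g.r x)) (π.op x (ξ (g.s x))) : ℂ)

/-- A fundamental sequence of Borel sections of the bundle of `π`. -/
structure IsFundSeq (π : GRep g E) (f : ℕ → G → E) : Prop where
  mem : ∀ n : ℕ, ∀ u ∈ g.units, f n u ∈ π.fib u
  meas : ∀ n : ℕ, Measurable (f n)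
  dense : ∀ u ∈ g.units, ∀ v ∈ π.fib u, ∀ ε : ℝ, 0 < ε →
    ∃ w ∈ Submodule.span ℂ (Set.range fun n => f n u), ‖v - w‖ < ε
  coeff_meas : ∀ n m : ℕ, Measurable (π.coeff (f n) (f m))

/-- `π` is a `D`-representation: some fundamental sequence has all its matrix
coefficients in `D`. -/
def IsDRep (π : GRep g E) (D : Set (G → ℂ)) : Prop :=
  ∃ f : ℕ → G → E, π.IsFundSeq f ∧ ∀ n m : ℕ, π.coeff (f n) (f m) ∈ D

/-- A square-integrable Borel section of the bundle of `π`, i.e. a vector of the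
direct integral `∫^⊕ H_π(u) dμ(u)`. -/
structure IsL2Section (π : GRep g E) (μ : MeasureTheory.Measure G) (ξ : G → E) : Prop where
  mem : ∀ u ∈ g.units, ξ u ∈ π.fib u
  meas : Measurable ξ
  sq : MeasureTheory.Integrable (fun u => ‖ξ u‖ ^ 2) μ

/-- `⟨π_μ(f) ξ, η⟩ = ∫_𝒢 f(x) ⟨π(x)ξ(s x), η(r x)⟩ Δ(x)^{-1/2} dν(x)`, the
sesquilinear pairing of the integrated form of `π` w.r.t. `μ` (with modular
function `Δ`). -/
def pairing (π : GRep g E) (μ : MeasureTheory.Measure G) (Δ : G → ℝ) (f : G → ℂ)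
    (ξ η : G → E) : ℂ :=
  ∫ u, (∑' x : g.rFiber u,
    f (x : G) * ((Δ (x : G) ^ (-(1 / 2) : ℝ) : ℝ) : ℂ) * π.coeff ξ η (x : G)) ∂μ

/-- The operator norm `‖π_μ(f)‖` of the integrated form, expressed as the supremum
of the pairings over the unit ball of (the dense subspace of square-integrable
Borel sections of) the direct integral. -/
def intNorm (π : GRep g E) (μ : MeasureTheory.Measure G) (Δ : G → ℝ) (f : G → ℂ) : ℝ :=
  sSup {t : ℝ | ∃ ξ η : G → E, π.IsL2Section μ ξ ∧ π.IsL2Section μ η ∧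
    (∫ u, ‖ξ u‖ ^ 2 ∂μ) ≤ 1 ∧ (∫ u, ‖η u‖ ^ 2 ∂μ) ≤ 1 ∧
    t = ‖π.pairing μ Δ f ξ η‖}

end GRep

namespace EtaleGroupoid

variable {G : Type} [TopologicalSpace G] [MeasurableSpace G]

/-- The set of quasi-invariant probability measures on the unit space. -/
def QIMeasures (g : EtaleGroupoid G) : Set (MeasureTheory.Measure G) :=
  {μ | g.IsQuasiInvariant μ}

/-- The seminorm `‖f‖_{D,ℳ} = sup {‖π_μ(f)‖ : π a D-representation, μ ∈ ℳ}`. -/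
def DNorm (g : EtaleGroupoid G) (D : Set (G → ℂ)) (M : Set (MeasureTheory.Measure G))
    (f : G → ℂ) : ℝ :=
  sSup {t : ℝ | ∃ π : GRep g Hamb, π.IsDRep D ∧ ∃ μ ∈ M, ∃ Δ : G → ℝ,
    g.IsModular μ Δ ∧ t = π.intNorm μ Δ f}

/-- The full norm `‖f‖_max = sup {‖π_μ(f)‖ : π any representation, μ quasi-invariant}`. -/
def maxNorm (g : EtaleGroupoid G) (f : G → ℂ) : ℝ :=
  sSup {t : ℝ | ∃ π : GRep g Hamb, ∃ μ ∈ g.QIMeasures, ∃ Δ : G → ℝ,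
    g.IsModular μ Δ ∧ t = π.intNorm μ Δ f}

/-- `‖Ind(δ_u)(f)‖`: the norm of left convolution by `f` on `ℓ²(𝒢_u)`, expressed as a
supremum of pairings against finitely supported vectors in the unit ball. -/
def IndDeltaNorm (g : EtaleGroupoid G) (u : G) (f : G → ℂ) : ℝ :=
  sSup {t : ℝ | ∃ ξ η : G → ℂ,
    (Function.support ξ).Finite ∧ Function.support ξ ⊆ g.sFiber u ∧
    (Function.support η).Finite ∧ Function.support η ⊆ g.sFiber u ∧
    (∑' x : g.sFiber u, ‖ξ (x : G)‖ ^ 2) ≤ 1 ∧ (∑' x : g.sFiber u, ‖η (x : G)‖ ^ 2) ≤ 1 ∧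
    t = ‖∑' x : g.sFiber u, g.conv f ξ (x : G) * conj (η (x : G))‖}

/-- The reduced norm `‖f‖_r = sup_{u ∈ 𝒢⁽⁰⁾} ‖Ind(δ_u)(f)‖`. -/
def redNorm (g : EtaleGroupoid G) (f : G → ℂ) : ℝ :=
  sSup {t : ℝ | ∃ u ∈ g.units, t = g.IndDeltaNorm u f}

/-- `‖Ind(μ)(f)‖`: the norm of left convolution by `f` on `L²(𝒢, ν⁻¹)`, expressed as a
supremum of pairings against bounded compactly supported Borel functions in the unit
ball of `L²(𝒢, ν⁻¹)`. -/
def IndMuNorm (g : EtaleGroupoid G) (μ : MeasureTheory.Measure G) (f : G → ℂ) : ℝ :=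
  sSup {t : ℝ | ∃ ξ η : G → ℂ, Measurable ξ ∧ Measurable η ∧ BddFun ξ ∧ BddFun η ∧
    HasCompactSupport ξ ∧ HasCompactSupport η ∧
    (∫ u, (∑' x : g.sFiber u, ‖ξ (x : G)‖ ^ 2) ∂μ) ≤ 1 ∧
    (∫ u, (∑' x : g.sFiber u, ‖η (x : G)‖ ^ 2) ∂μ) ≤ 1 ∧
    t = ‖∫ u, (∑' x : g.sFiber u, g.conv f ξ (x : G) * conj (η (x : G))) ∂μ‖}

/-- The norm of `L²(𝒢, ν⁻¹)`. -/
def L2s (g : EtaleGroupoid G) (μ : MeasureTheory.Measure G) (h : G → ℂ) : ℝ :=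
  Real.sqrt (∫ u, (∑' x : g.sFiber u, ‖h (x : G)‖ ^ 2) ∂μ)

/-- Products of `n` elements of `S` (units for `n = 0`). -/
def Spow (g : EtaleGroupoid G) (S : Set G) : ℕ → Set G
  | 0 => g.units
  | n + 1 => {z | ∃ x ∈ S, ∃ y ∈ Spow g S n, g.s x = g.r y ∧ z = g.mul x y}

/-- The ball `∪_{k ≤ n} S^k`. -/
def ball (g : EtaleGroupoid G) (S : Set G) (n : ℕ) : Set G :=
  ⋃ k ∈ Finset.range (n + 1), g.Spow S k

/-- The length function `l_S(x) = min {n ≥ 0 : x ∈ ∪_{k ≤ n} S^k}`. -/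
def lS (g : EtaleGroupoid G) (S : Set G) (x : G) : ℕ := sInf {n : ℕ | x ∈ g.ball S n}

/-- The fibre Cayley-graph metric `d(x, y) = l_S (x⁻¹ y)` (as a real number). -/
def dS (g : EtaleGroupoid G) (S : Set G) (x y : G) : ℝ := (g.lS S (g.mul (g.inv x) y) : ℝ)

/-- `S` is a compact open symmetric generating set making all fibre Cayley graphs
`δ`-hyperbolic; i.e. `𝒢` is a hyperbolic groupoid (witnessed by `S` and `δ`). -/
structure IsHyperbolicGen (g : EtaleGroupoid G) (S : Set G) (δ : ℝ) : Prop where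
  compact : IsCompact S
  isOpen : IsOpen S
  symm : ∀ x ∈ S, g.inv x ∈ S
  gen : ∀ x : G, ∃ n : ℕ, 1 ≤ n ∧ x ∈ g.Spow S n
  delta_pos : 0 < δ
  hyp : ∀ u ∈ g.units, ∀ a ∈ g.rFiber u, ∀ b ∈ g.rFiber u, ∀ c ∈ g.rFiber u,
    ∀ d ∈ g.rFiber u,
      g.dS S a b + g.dS S c d ≤ max (g.dS S a c + g.dS S b d) (g.dS S a d + g.dS S b c) + δ

/-- The ideal `ℒ^p_μ(𝒢)` of bounded Borel functions which are `p`-integrable for the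
induced measure `ν`. -/
def LpIdeal (g : EtaleGroupoid G) (μ : MeasureTheory.Measure G) (p : ℝ) : Set (G → ℂ) :=
  {f | Measurable f ∧ BddFun f ∧
    g.fiberL μ (fun x => ENNReal.ofReal (‖f x‖ ^ p)) ≠ ⊤}

/-- The `ℒ^p_μ`-seminorm `|f|_p`. -/
def lpSeminorm (g : EtaleGroupoid G) (μ : MeasureTheory.Measure G) (p : ℝ) (f : G → ℂ) : ℝ :=
  ((g.fiberL μ fun x => ENNReal.ofReal (‖f x‖ ^ p)).toReal) ^ (1 / p)

/-- `‖f‖_{ℒ^p_μ(𝒢), μ}`: the supremum of `‖π_μ(f)‖` over all `ℒ^p_μ(𝒢)`-representations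
(for an invariant `μ`, so `Δ ≡ 1`). -/
def LpDNorm (g : EtaleGroupoid G) (μ : MeasureTheory.Measure G) (p : ℝ) (f : G → ℂ) : ℝ :=
  sSup {t : ℝ | ∃ π : GRep g Hamb, π.IsDRep (g.LpIdeal μ p) ∧
    t = π.intNorm μ (fun _ => 1) f}

end EtaleGroupoid

section Aux
set_option linter.unusedSectionVars false

namespace EtaleGroupoid

variable {G : Type} [TopologicalSpace G] [MeasurableSpace G] (g : EtaleGroupoid G)

lemma s_eq_r_inv (x : G) : g.s x = g.r (g.inv x) := by
  have := g.s_inv (g.inv x)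
  rw [g.inv_inv] at this
  exact this

lemma mul_s_self (x : G) : g.mul x (g.s x) = x := by
  have h := g.inv_mul_cancel' (g.inv x) x (by rw [g.s_inv])
  rw [g.inv_inv] at h
  rw [g.s_def]
  exact h

lemma r_mem_units (x : G) : g.r x ∈ g.units := ⟨x, rfl⟩

lemma s_mem_units (x : G) : g.s x ∈ g.units := ⟨g.inv x, (g.s_eq_r_inv x).symm⟩

lemma r_unit {u : G} (hu : u ∈ g.units) : g.r u = u := by
  obtain ⟨x, rfl⟩ := hu
  rw [g.r_def x]
  rw [g.r_mul x (g.inv x) (g.s_eq_r_inv x), ← g.r_def]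

lemma s_unit {u : G} (hu : u ∈ g.units) : g.s u = u := by
  obtain ⟨x, rfl⟩ := hu
  rw [g.r_def x, g.s_mul x (g.inv x) (g.s_eq_r_inv x), g.s_inv, ← g.r_def]

lemma r_mul_self (x : G) : g.mul (g.r x) x = x := by
  conv_lhs => rw [g.r_def x]
  rw [g.mul_assoc' x (g.inv x) x (g.s_eq_r_inv x) (by rw [g.s_inv]),
    ← g.s_def, g.mul_s_self]

lemma unit_mul {u b : G} (hu : u ∈ g.units) (h : u = g.r b) : g.mul u b = b := by
  subst h; exact g.r_mul_self b

lemma mul_cancel_left {x w : G} (h : g.r x = g.r w) :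
    g.mul x (g.mul (g.inv x) w) = w := by
  have h2 := g.inv_mul_cancel' (g.inv x) w (by rw [g.s_inv, h])
  rw [g.inv_inv] at h2
  exact h2

lemma inv_mul_rev {x y : G} (h : g.s x = g.r y) :
    g.inv (g.mul x y) = g.mul (g.inv y) (g.inv x) := by
  set z := g.mul x y with hz
  set w := g.mul (g.inv y) (g.inv x) with hw
  have hcomp : g.s (g.inv y) = g.r (g.inv x) := by
    rw [g.s_inv, ← g.s_eq_r_inv, ← h]
  have hzw : g.mul z w = g.r z := by
    have h1 : g.mul y w = g.inv x := by
      rw [hw]; exact g.mul_cancel_left (by rw [← g.s_eq_r_inv, h])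
    have h2 : g.mul z w = g.mul x (g.mul y w) :=
      g.mul_assoc' x y w h (by rw [hw, g.r_mul _ _ hcomp]; exact g.s_eq_r_inv y)
    rw [h2, h1, ← g.r_def, hz, g.r_mul x y h]
  have hsz : g.s z = g.r w := by
    rw [hz, g.s_mul x y h, hw, g.r_mul _ _ hcomp]
    exact g.s_eq_r_inv y
  calc g.inv z = g.mul (g.inv z) (g.s (g.inv z)) := (g.mul_s_self _).symm
    _ = g.mul (g.inv z) (g.mul z w) := by rw [g.s_inv, hzw]
    _ = w := g.inv_mul_cancel' z w hsz

lemma inv_unit {u : G} (hu : u ∈ g.units) : g.inv u = u := by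
  obtain ⟨x, rfl⟩ := hu
  rw [g.r_def x, g.inv_mul_rev (g.s_eq_r_inv x), g.inv_inv, ← g.r_def]

/-- Composable products multiply `Spow` degrees. -/
lemma Spow_mul {S : Set G} {m n : ℕ} {a b : G} (ha : a ∈ g.Spow S m)
    (hb : b ∈ g.Spow S n) (h : g.s a = g.r b) : g.mul a b ∈ g.Spow S (m + n) := by
  induction m generalizing a with
  | zero =>
    have hu : a = g.r b := by rw [← g.s_unit ha]; exact h
    rw [g.unit_mul ha hu]
    simpa using hb
  | succ k ih =>
    obtain ⟨x, hx, y, hy, hxy, rfl⟩ := ha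
    have hsy : g.s y = g.r b := by rw [← g.s_mul x y hxy, h]
    have hyb := ih hy hsy
    have : g.mul (g.mul x y) b = g.mul x (g.mul y b) := g.mul_assoc' x y b hxy hsy
    rw [this]
    have hidx : k + 1 + n = (k + n) + 1 := by omega
    rw [hidx]
    exact ⟨x, hx, g.mul y b, hyb, by rw [g.r_mul y b hsy]; exact hxy, rfl⟩

lemma Spow_one {S : Set G} : g.Spow S 1 = S := by
  ext z
  constructor
  · rintro ⟨x, hx, y, hy, hxy, rfl⟩
    have hy2 : y = g.s x := ((g.r_unit hy).symm.trans hxy.symm)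
    rw [hy2, g.mul_s_self]; exact hx
  · intro hz
    exact ⟨z, hz, g.s z, g.s_mem_units z, (g.r_unit (g.s_mem_units z)).symm,
      (g.mul_s_self z).symm⟩

lemma Spow_inv {S : Set G} (hsymm : ∀ x ∈ S, g.inv x ∈ S) {n : ℕ} {a : G}
    (ha : a ∈ g.Spow S n) : g.inv a ∈ g.Spow S n := by
  induction n generalizing a with
  | zero => rw [g.inv_unit ha]; exact ha
  | succ k ih =>
    obtain ⟨x, hx, y, hy, hxy, rfl⟩ := ha
    rw [g.inv_mul_rev hxy]
    have h1 : g.inv x ∈ g.Spow S 1 := by rw [g.Spow_one]; exact hsymm x hx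
    have hcomp : g.s (g.inv y) = g.r (g.inv x) := by
      rw [g.s_inv, ← g.s_eq_r_inv, ← hxy]
    exact g.Spow_mul (ih hy) h1 hcomp

lemma unit_mem_Spow_two {S : Set G} (hsymm : ∀ x ∈ S, g.inv x ∈ S)
    (hgen : ∀ x : G, ∃ n : ℕ, 1 ≤ n ∧ x ∈ g.Spow S n)
    {u : G} (hu : u ∈ g.units) : u ∈ g.Spow S 2 := by
  obtain ⟨x, rfl⟩ := hu
  obtain ⟨n, hn1, hx⟩ := hgen x
  obtain ⟨k, rfl⟩ := Nat.exists_eq_add_of_le hn1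
  rw [show 1 + k = k + 1 by omega] at hx
  obtain ⟨a, ha, y, hy, hay, rfl⟩ := hx
  rw [g.r_mul a y hay, g.r_def a]
  exact ⟨a, ha, g.inv a, by rw [g.Spow_one]; exact hsymm a ha, g.s_eq_r_inv a, rfl⟩

lemma Spow_mono_two {S : Set G} (hsymm : ∀ x ∈ S, g.inv x ∈ S)
    (hgen : ∀ x : G, ∃ n : ℕ, 1 ≤ n ∧ x ∈ g.Spow S n) {k : ℕ} {z : G}
    (hz : z ∈ g.Spow S k) : z ∈ g.Spow S (k + 2) := by
  induction k generalizing z with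
  | zero => exact g.unit_mem_Spow_two hsymm hgen hz
  | succ k ih =>
    obtain ⟨x, hx, y, hy, hxy, rfl⟩ := hz
    exact ⟨x, hx, y, ih hy, hxy, rfl⟩

lemma mem_ball_of_mem_Spow {S : Set G} {k n : ℕ} (hk : k ≤ n) {x : G}
    (hx : x ∈ g.Spow S k) : x ∈ g.ball S n := by
  have hk' : k ∈ Finset.range (n + 1) := Finset.mem_range.mpr (by omega)
  exact Set.mem_biUnion hk' hx

lemma lS_le_of_mem_Spow {S : Set G} {k : ℕ} {x : G} (hx : x ∈ g.Spow S k) :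
    g.lS S x ≤ k := Nat.sInf_le (g.mem_ball_of_mem_Spow le_rfl hx)

lemma exists_Spow_le_lS {S : Set G} (hgen : ∀ x : G, ∃ n : ℕ, 1 ≤ n ∧ x ∈ g.Spow S n)
    (x : G) : ∃ k ≤ g.lS S x, x ∈ g.Spow S k := by
  have hne : {n : ℕ | x ∈ g.ball S n}.Nonempty := by
    obtain ⟨n, _, hx⟩ := hgen x
    exact ⟨n, g.mem_ball_of_mem_Spow le_rfl hx⟩
  have hmem : x ∈ g.ball S (g.lS S x) := Nat.sInf_mem hne
  obtain ⟨k, hk, hxk⟩ := Set.mem_iUnion₂.mp hmem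
  exact ⟨k, by simpa [Finset.mem_range, Nat.lt_succ_iff] using hk, hxk⟩

lemma lS_mul_le {S : Set G} (hgen : ∀ x : G, ∃ n : ℕ, 1 ≤ n ∧ x ∈ g.Spow S n)
    {a b : G} (h : g.s a = g.r b) :
    g.lS S (g.mul a b) ≤ g.lS S a + g.lS S b := by
  obtain ⟨k₁, hk₁, ha⟩ := g.exists_Spow_le_lS hgen a
  obtain ⟨k₂, hk₂, hb⟩ := g.exists_Spow_le_lS hgen b
  calc g.lS S (g.mul a b) ≤ k₁ + k₂ := g.lS_le_of_mem_Spow (g.Spow_mul ha hb h)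
    _ ≤ _ := by omega

lemma lS_inv_le {S : Set G} (hsymm : ∀ x ∈ S, g.inv x ∈ S)
    (hgen : ∀ x : G, ∃ n : ℕ, 1 ≤ n ∧ x ∈ g.Spow S n) (a : G) :
    g.lS S (g.inv a) ≤ g.lS S a := by
  obtain ⟨k, hk, ha⟩ := g.exists_Spow_le_lS hgen a
  exact le_trans (g.lS_le_of_mem_Spow (g.Spow_inv hsymm ha)) hk

lemma lS_inv {S : Set G} (hsymm : ∀ x ∈ S, g.inv x ∈ S)
    (hgen : ∀ x : G, ∃ n : ℕ, 1 ≤ n ∧ x ∈ g.Spow S n) (a : G) :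
    g.lS S (g.inv a) = g.lS S a := by
  refine le_antisymm (g.lS_inv_le hsymm hgen a) ?_
  have := g.lS_inv_le hsymm hgen (g.inv a)
  rwa [g.inv_inv] at this

/-- The product of two open sets is open in an étale groupoid. -/
lemma mul_isOpen {U V : Set G} (hU : IsOpen U) (hV : IsOpen V) :
    IsOpen {z : G | ∃ x ∈ U, ∃ y ∈ V, g.s x = g.r y ∧ z = g.mul x y} := by
  rw [isOpen_iff_forall_mem_open]
  rintro z ⟨x, hxU, y, hyV, hxy, rfl⟩
  obtain ⟨U₁, hU₁open, hxU₁, hinj, himg⟩ := g.etale x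
  have hrz : g.r (g.mul x y) = g.r x := g.r_mul x y hxy
  have hcomp0 : g.s (g.inv x) = g.r (g.mul x y) := by rw [g.s_inv, hrz]
  have hprod : g.mul (g.inv x) (g.mul x y) ∈ V := by
    rw [g.inv_mul_cancel' x y hxy]; exact hyV
  obtain ⟨U', V', hU'open, hV'open, hinvx, hzV', hUV⟩ :=
    g.continuous_mul (g.inv x) (g.mul x y) hcomp0 V hV hprod
  set B : Set G := U ∩ U₁ ∩ g.inv ⁻¹' U' with hB
  have hBopen : IsOpen B := (hU.inter hU₁open).inter (hU'open.preimage g.continuous_inv)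
  have hxB : x ∈ B := ⟨⟨hxU, hxU₁⟩, hinvx⟩
  have hrB : IsOpen (g.r '' B) := himg B (fun w hw => hw.1.2) hBopen
  refine ⟨V' ∩ g.r ⁻¹' (g.r '' B), ?_, hV'open.inter (hrB.preimage g.continuous_r),
    ⟨hzV', ⟨x, hxB, hrz.symm⟩⟩⟩
  rintro w ⟨hwV', b, hbB, hrb⟩
  have hcomp1 : g.s (g.inv b) = g.r w := by rw [g.s_inv, hrb]
  have hv : g.mul (g.inv b) w ∈ V := hUV (g.inv b) hbB.2 w hwV' hcomp1
  refine ⟨b, hbB.1.1, g.mul (g.inv b) w, hv, ?_, (g.mul_cancel_left hrb).symm⟩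
  rw [g.r_mul _ _ hcomp1]
  exact g.s_eq_r_inv b

lemma Spow_succ_def (S : Set G) (n : ℕ) :
    g.Spow S (n + 1) =
      {z : G | ∃ x ∈ S, ∃ y ∈ g.Spow S n, g.s x = g.r y ∧ z = g.mul x y} := by
  rfl

lemma Spow_succ_isOpen {S : Set G} (hSopen : IsOpen S) (n : ℕ) :
    IsOpen (g.Spow S (n + 1)) := by
  induction n with
  | zero => rw [g.Spow_one]; exact hSopen
  | succ k ih =>
    rw [g.Spow_succ_def]
    exact g.mul_isOpen hSopen ih

/-- The length function is bounded on compact sets. -/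
lemma exists_radius {S : Set G} (hSopen : IsOpen S)
    (hgen : ∀ x : G, ∃ n : ℕ, 1 ≤ n ∧ x ∈ g.Spow S n) {K : Set G} (hK : IsCompact K) :
    ∃ R : ℕ, ∀ x ∈ K, g.lS S x ≤ R := by
  have hcov : K ⊆ ⋃ n : ℕ, g.Spow S (n + 1) := by
    intro x _
    obtain ⟨n, hn1, hx⟩ := hgen x
    obtain ⟨k, rfl⟩ := Nat.exists_eq_add_of_le hn1
    exact Set.mem_iUnion.mpr ⟨k, by rw [show k + 1 = 1 + k by omega]; exact hx⟩
  obtain ⟨t, ht⟩ := hK.elim_finite_subcover (fun n => g.Spow S (n + 1))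
    (fun n => g.Spow_succ_isOpen hSopen n) hcov
  refine ⟨t.sup id + 1, fun x hx => ?_⟩
  obtain ⟨n, hn, hxn⟩ := Set.mem_iUnion₂.mp (ht hx)
  refine le_trans (g.lS_le_of_mem_Spow hxn) ?_
  have := Finset.le_sup (f := id) hn
  simp only [id_eq] at this
  omega

/-- Uniform bound on the cardinality of fibres of a compact set. -/
lemma exists_fiber_bound {K : Set G} (hK : IsCompact K) :
    ∃ N : ℕ, ∀ u : G, (K ∩ g.rFiber u).Finite ∧ (K ∩ g.rFiber u).ncard ≤ N := by
  choose U hopen hmem hinj _ using g.etale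
  obtain ⟨t, ht⟩ := hK.elim_finite_subcover U hopen
    (fun x hx => Set.mem_iUnion.mpr ⟨x, hmem x⟩)
  refine ⟨t.card, fun u => ?_⟩
  have hsub : ∀ x : G, (U x ∩ g.rFiber u).Subsingleton := by
    rintro x a ⟨haU, har⟩ b ⟨hbU, hbr⟩
    exact hinj x haU hbU (har.trans hbr.symm)
  have hbU : ∀ s : Finset G, (⋃ x ∈ s, (U x ∩ g.rFiber u)).Finite ∧
      (⋃ x ∈ s, (U x ∩ g.rFiber u)).ncard ≤ s.card := by
    classical
    intro s
    induction s using Finset.induction_on with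
    | empty => simp
    | insert a s hnotmem ih =>
      rw [Finset.set_biUnion_insert]
      refine ⟨((hsub a).finite).union ih.1, ?_⟩
      calc ((U a ∩ g.rFiber u) ∪ ⋃ x ∈ s, (U x ∩ g.rFiber u)).ncard
          ≤ (U a ∩ g.rFiber u).ncard + (⋃ x ∈ s, (U x ∩ g.rFiber u)).ncard :=
            Set.ncard_union_le _ _
        _ ≤ 1 + s.card := Nat.add_le_add
            ((Set.ncard_le_one ((hsub a).finite)).mpr (hsub a)) ih.2
        _ ≤ (insert a s).card := by rw [Finset.card_insert_of_notMem hnotmem]; omega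
  have hKsub : K ∩ g.rFiber u ⊆ ⋃ x ∈ t, (U x ∩ g.rFiber u) := by
    rintro w ⟨hwK, hwr⟩
    obtain ⟨x, hxt, hwU⟩ := Set.mem_iUnion₂.mp (ht hwK)
    exact Set.mem_biUnion hxt ⟨hwU, hwr⟩
  exact ⟨((hbU t).1).subset hKsub,
    le_trans (Set.ncard_le_ncard hKsub (hbU t).1) (hbU t).2⟩

end EtaleGroupoid

end Aux

section Statements

variable {G : Type} [TopologicalSpace G] [T2Space G] [SecondCountableTopology G]
  [LocallyCompactSpace G] [MeasurableSpace G] [BorelSpace G]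

/-- `π` is (a realization of) the GNS representation associated to the bounded positive
definite function `F`: it carries a fundamental sequence given by the restrictions
`σ(f_n)` of a sup-norm dense sequence `{f_n} ⊆ C_c(𝒢)`, whose matrix coefficients are
`⟨π_F(x) σ(f_n)(s x), σ(f_m)(r x)⟩ = Σ_{y,z ∈ 𝒢^{r x}} f_n(x⁻¹z) conj(f_m(y)) F(y⁻¹z)`. -/
def IsGNSRepOf (g : EtaleGroupoid G) {E : Type} [NormedAddCommGroup E]
    [InnerProductSpace ℂ E] [MeasurableSpace E] (F : G → ℂ) (π : GRep g E) : Prop :=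
  ∃ fs : ℕ → G → ℂ, (∀ n, g.IsCc (fs n)) ∧
    (∀ h : G → ℂ, g.IsCc h → ∀ ε : ℝ, 0 < ε → ∃ n, ∀ x : G, ‖h x - fs n x‖ < ε) ∧
    ∃ σ : ℕ → G → E, π.IsFundSeq σ ∧
      ∀ n m : ℕ, π.coeff (σ n) (σ m) = fun x : G =>
        ∑' y : g.rFiber (g.r x), ∑' z : g.rFiber (g.r x),
          fs n (g.mul (g.inv x) (z : G)) * conj (fs m (y : G)) *
            F (g.mul (g.inv (y : G)) (z : G))

/-- Let `𝒢` be hyperbolic with generating set `S`, `μ` invariant,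
`α ∈ (0,1)`, `p ∈ [1,∞)`.  If `φ_α = α^{l_S(·)}` belongs to `ℒ^p_μ(𝒢)`, then the GNS
representation of `𝒢` associated to `φ_α` is an `ℒ^p_μ(𝒢)`-representation. -/
theorem gns_of_phi_alpha_is_lp_rep
    (g : EtaleGroupoid G) (S : Set G) (δ : ℝ) (hS : g.IsHyperbolicGen S δ)
    (μ : MeasureTheory.Measure G) (hinv : g.IsInvariant μ)
    (α : ℝ) (hα0 : 0 < α) (hα1 : α < 1) (p : ℝ) (hp : 1 ≤ p)
    (hmem : (fun x : G => ((α ^ g.lS S x : ℝ) : ℂ)) ∈ g.LpIdeal μ p)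
    (E : Type) [NormedAddCommGroup E] [InnerProductSpace ℂ E] [MeasurableSpace E]
    (π : GRep g E)
    (hπ : IsGNSRepOf g (fun x : G => ((α ^ g.lS S x : ℝ) : ℂ)) π) :
    π.IsDRep (g.LpIdeal μ p) := by
  classical
  obtain ⟨fs, hfsCc, -, σ, hfund, hco⟩ := hπ
  have hgen := hS.gen
  have hα0' : (0:ℝ) ≤ α := hα0.le
  have hα1' : α ≤ 1 := hα1.le
  refine ⟨σ, hfund, fun n m => ?_⟩
  obtain ⟨Mn', hMn'⟩ : ∃ M : ℝ, ∀ x, ‖fs n x‖ ≤ M :=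
    (hfsCc n).2.exists_bound_of_continuous (hfsCc n).1
  obtain ⟨Mm', hMm'⟩ : ∃ M : ℝ, ∀ x, ‖fs m x‖ ≤ M :=
    (hfsCc m).2.exists_bound_of_continuous (hfsCc m).1
  set Mn : ℝ := max Mn' 0 with hMndef
  set Mm : ℝ := max Mm' 0 with hMmdef
  have hMn : ∀ x, ‖fs n x‖ ≤ Mn := fun x => le_trans (hMn' x) (le_max_left _ _)
  have hMm : ∀ x, ‖fs m x‖ ≤ Mm := fun x => le_trans (hMm' x) (le_max_left _ _)
  have hMn0 : (0:ℝ) ≤ Mn := le_max_right _ _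
  have hMm0 : (0:ℝ) ≤ Mm := le_max_right _ _
  obtain ⟨Rn, hRn⟩ := g.exists_radius hS.isOpen hgen (hfsCc n).2
  obtain ⟨Rm, hRm⟩ := g.exists_radius hS.isOpen hgen (hfsCc m).2
  obtain ⟨Nn, hNn⟩ := g.exists_fiber_bound (hfsCc n).2
  obtain ⟨Nm, hNm⟩ := g.exists_fiber_bound (hfsCc m).2
  set R : ℕ := Rn + Rm with hRdef
  set C : ℝ := (Nm * Nn * Mn * Mm) / α ^ R with hCdef
  have hC0 : 0 ≤ C := by positivity
  have key : ∀ x : G, ‖π.coeff (σ n) (σ m) x‖ ≤ C * α ^ g.lS S x := by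
    intro x
    have hrz : ∀ z : ↥(g.rFiber (g.r x)), g.r (z : G) = g.r x := fun z => z.2
    have hcompz : ∀ z : ↥(g.rFiber (g.r x)), g.s (g.inv x) = g.r (z : G) := by
      intro z; rw [g.s_inv, hrz]
    have hψinj : Function.Injective
        (fun z : ↥(g.rFiber (g.r x)) => g.mul (g.inv x) (z : G)) := by
      intro z₁ z₂ h12
      have e1 : g.mul x (g.mul (g.inv x) (z₁ : G)) = (z₁ : G) :=
        g.mul_cancel_left (hrz z₁).symm
      have e2 : g.mul x (g.mul (g.inv x) (z₂ : G)) = (z₂ : G) :=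
        g.mul_cancel_left (hrz z₂).symm
      refine Subtype.ext ?_
      simp only at h12
      rw [← e1, ← e2, h12]
    have hψim : (fun z : ↥(g.rFiber (g.r x)) => g.mul (g.inv x) (z : G)) '' {z : ↥(g.rFiber (g.r x)) | fs n (g.mul (g.inv x) (z : G)) ≠ 0} ⊆
        tsupport (fs n) ∩ g.rFiber (g.s x) := by
      rintro - ⟨z, hz, rfl⟩
      refine ⟨subset_tsupport _ hz, ?_⟩
      show g.r _ = g.s x
      rw [g.r_mul _ _ (hcompz z), ← g.s_eq_r_inv]
    have hZfin : Set.Finite {z : ↥(g.rFiber (g.r x)) | fs n (g.mul (g.inv x) (z : G)) ≠ 0} :=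
      Set.Finite.of_finite_image (((hNn (g.s x)).1).subset hψim) hψinj.injOn
    have hZcard : Set.ncard {z : ↥(g.rFiber (g.r x)) | fs n (g.mul (g.inv x) (z : G)) ≠ 0} ≤ Nn := by
      rw [← Set.ncard_image_of_injOn hψinj.injOn]
      exact le_trans (Set.ncard_le_ncard hψim (hNn (g.s x)).1) (hNn (g.s x)).2
    have hYim : (Subtype.val : ↥(g.rFiber (g.r x)) → G) '' {y : ↥(g.rFiber (g.r x)) | fs m (y : G) ≠ 0} ⊆
        tsupport (fs m) ∩ g.rFiber (g.r x) := by
      rintro - ⟨y, hy, rfl⟩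
      exact ⟨subset_tsupport _ hy, y.2⟩
    have hYfin : Set.Finite {y : ↥(g.rFiber (g.r x)) | fs m (y : G) ≠ 0} :=
      Set.Finite.of_finite_image (((hNm (g.r x)).1).subset hYim) Subtype.val_injective.injOn
    have hYcard : Set.ncard {y : ↥(g.rFiber (g.r x)) | fs m (y : G) ≠ 0} ≤ Nm := by
      rw [← Set.ncard_image_of_injOn Subtype.val_injective.injOn]
      exact le_trans (Set.ncard_le_ncard hYim (hNm (g.r x)).1) (hNm (g.r x)).2
    have hinner : ∀ y : ↥(g.rFiber (g.r x)),
        (∑' z : ↥(g.rFiber (g.r x)), fs n (g.mul (g.inv x) (z : G)) * conj (fs m (y : G)) * ((α ^ g.lS S (g.mul (g.inv (y : G)) (z : G)) : ℝ) : ℂ)) =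
          ∑ z ∈ hZfin.toFinset, fs n (g.mul (g.inv x) (z : G)) * conj (fs m (y : G)) * ((α ^ g.lS S (g.mul (g.inv (y : G)) (z : G)) : ℝ) : ℂ) := by
      intro y
      refine tsum_eq_sum (fun z hz => ?_)
      have h0 : fs n (g.mul (g.inv x) (z : G)) = 0 := by
        by_contra h
        exact hz (hZfin.mem_toFinset.mpr h)
      rw [h0, zero_mul, zero_mul]
    have houter : (∑' y : ↥(g.rFiber (g.r x)), ∑' z : ↥(g.rFiber (g.r x)), fs n (g.mul (g.inv x) (z : G)) * conj (fs m (y : G)) * ((α ^ g.lS S (g.mul (g.inv (y : G)) (z : G)) : ℝ) : ℂ)) =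
        ∑ y ∈ hYfin.toFinset, ∑ z ∈ hZfin.toFinset, fs n (g.mul (g.inv x) (z : G)) * conj (fs m (y : G)) * ((α ^ g.lS S (g.mul (g.inv (y : G)) (z : G)) : ℝ) : ℂ) := by
      rw [tsum_eq_sum (s := hYfin.toFinset) (fun y hy => ?_)]
      · exact Finset.sum_congr rfl (fun y _ => hinner y)
      · have h0 : fs m (y : G) = 0 := by
          by_contra h
          exact hy (hYfin.mem_toFinset.mpr h)
        have hzz : ∀ z : ↥(g.rFiber (g.r x)), fs n (g.mul (g.inv x) (z : G)) * conj (fs m (y : G)) * ((α ^ g.lS S (g.mul (g.inv (y : G)) (z : G)) : ℝ) : ℂ) = (0 : ℂ) := by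
          intro z
          rw [h0, map_zero, mul_zero, zero_mul]
        rw [tsum_congr hzz, tsum_zero]
    have hterm : ∀ y ∈ hYfin.toFinset, ∀ z ∈ hZfin.toFinset,
        ‖fs n (g.mul (g.inv x) (z : G)) * conj (fs m (y : G)) * ((α ^ g.lS S (g.mul (g.inv (y : G)) (z : G)) : ℝ) : ℂ)‖ ≤ Mn * Mm * (α ^ g.lS S x / α ^ R) := by
      intro y hy z hz
      have hyS : fs m (y : G) ≠ 0 := hYfin.mem_toFinset.mp hy
      have hzS : fs n (g.mul (g.inv x) (z : G)) ≠ 0 := hZfin.mem_toFinset.mp hz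
      have hlz : g.lS S (g.mul (g.inv x) (z : G)) ≤ Rn :=
        hRn _ (subset_tsupport _ hzS)
      have hly : g.lS S (y : G) ≤ Rm := hRm _ (subset_tsupport _ hyS)
      have hry : g.r (y : G) = g.r x := y.2
      have hcompy : g.s (g.inv (y : G)) = g.r (z : G) := by
        rw [g.s_inv, hry, hrz]
      have ha : g.r (g.mul (g.inv (y : G)) (z : G)) = g.s (y : G) := by
        rw [g.r_mul _ _ hcompy, ← g.s_eq_r_inv]
      have hcompzx : g.s (g.inv (z : G)) = g.r x := by rw [g.s_inv, hrz]
      have hb : g.r (g.mul (g.inv (z : G)) x) = g.s (z : G) := by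
        rw [g.r_mul _ _ hcompzx, ← g.s_eq_r_inv]
      have hx1 : g.mul (z : G) (g.mul (g.inv (z : G)) x) = x :=
        g.mul_cancel_left (hrz z)
      have hz1 : g.mul (y : G) (g.mul (g.inv (y : G)) (z : G)) = (z : G) :=
        g.mul_cancel_left (by rw [hry, hrz])
      have hlen1 : g.lS S x ≤ g.lS S (z : G) + g.lS S (g.mul (g.inv (z : G)) x) := by
        conv_lhs => rw [← hx1]
        exact g.lS_mul_le hgen (by rw [hb])
      have hlen2 : g.lS S (z : G) ≤ g.lS S (y : G) +
          g.lS S (g.mul (g.inv (y : G)) (z : G)) := by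
        conv_lhs => rw [← hz1]
        exact g.lS_mul_le hgen (by rw [ha])
      have hbinv : g.mul (g.inv (z : G)) x = g.inv (g.mul (g.inv x) (z : G)) := by
        rw [g.inv_mul_rev (hcompz z), g.inv_inv]
      have hlen3 : g.lS S (g.mul (g.inv (z : G)) x) ≤ Rn := by
        rw [hbinv, g.lS_inv hS.symm hgen]
        exact hlz
      have hexp : g.lS S x ≤ g.lS S (g.mul (g.inv (y : G)) (z : G)) + R := by
        rw [hRdef]; omega
      have hpow : α ^ g.lS S (g.mul (g.inv (y : G)) (z : G)) ≤ α ^ g.lS S x / α ^ R := by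
        rw [le_div_iff₀ (pow_pos hα0 R), ← pow_add]
        exact pow_le_pow_of_le_one hα0' hα1' hexp
      have hnormφ : ‖((α ^ g.lS S (g.mul (g.inv (y : G)) (z : G)) : ℝ) : ℂ)‖ =
          α ^ g.lS S (g.mul (g.inv (y : G)) (z : G)) := by
        rw [Complex.norm_real, Real.norm_eq_abs, abs_of_nonneg (pow_nonneg hα0' _)]
      calc ‖fs n (g.mul (g.inv x) (z : G)) * conj (fs m (y : G)) * ((α ^ g.lS S (g.mul (g.inv (y : G)) (z : G)) : ℝ) : ℂ)‖
          = ‖fs n (g.mul (g.inv x) (z : G))‖ * ‖fs m (y : G)‖ *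
            (α ^ g.lS S (g.mul (g.inv (y : G)) (z : G))) := by
            rw [norm_mul, norm_mul, RCLike.norm_conj, hnormφ]
        _ ≤ Mn * Mm * (α ^ g.lS S x / α ^ R) := by
            have h1 := hMn (g.mul (g.inv x) (z : G))
            have h2 := hMm (y : G)
            have h3 : (0:ℝ) ≤ α ^ g.lS S (g.mul (g.inv (y : G)) (z : G)) :=
              pow_nonneg hα0' _
            have h4 : (0:ℝ) ≤ α ^ g.lS S x / α ^ R := by positivity
            exact mul_le_mul (mul_le_mul h1 h2 (norm_nonneg _) hMn0)
              hpow h3 (by positivity)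
    have hYc : (hYfin.toFinset.card : ℝ) ≤ (Nm : ℝ) := by
      have := Set.ncard_eq_toFinset_card _ hYfin
      exact_mod_cast this ▸ hYcard
    have hZc : (hZfin.toFinset.card : ℝ) ≤ (Nn : ℝ) := by
      have := Set.ncard_eq_toFinset_card _ hZfin
      exact_mod_cast this ▸ hZcard
    have bound : ‖∑' y : ↥(g.rFiber (g.r x)), ∑' z : ↥(g.rFiber (g.r x)), fs n (g.mul (g.inv x) (z : G)) * conj (fs m (y : G)) * ((α ^ g.lS S (g.mul (g.inv (y : G)) (z : G)) : ℝ) : ℂ)‖ ≤ C * α ^ g.lS S x := by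
      calc ‖∑' y : ↥(g.rFiber (g.r x)), ∑' z : ↥(g.rFiber (g.r x)), fs n (g.mul (g.inv x) (z : G)) * conj (fs m (y : G)) * ((α ^ g.lS S (g.mul (g.inv (y : G)) (z : G)) : ℝ) : ℂ)‖
          = ‖∑ y ∈ hYfin.toFinset, ∑ z ∈ hZfin.toFinset, fs n (g.mul (g.inv x) (z : G)) * conj (fs m (y : G)) * ((α ^ g.lS S (g.mul (g.inv (y : G)) (z : G)) : ℝ) : ℂ)‖ := by
            rw [houter]
        _ ≤ ∑ y ∈ hYfin.toFinset, ∑ z ∈ hZfin.toFinset, ‖fs n (g.mul (g.inv x) (z : G)) * conj (fs m (y : G)) * ((α ^ g.lS S (g.mul (g.inv (y : G)) (z : G)) : ℝ) : ℂ)‖ :=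
            le_trans (norm_sum_le _ _) (Finset.sum_le_sum fun y _ => norm_sum_le _ _)
        _ ≤ ∑ y ∈ hYfin.toFinset, ∑ z ∈ hZfin.toFinset, (Mn * Mm * (α ^ g.lS S x / α ^ R)) :=
            Finset.sum_le_sum fun y hy => Finset.sum_le_sum fun z hz => hterm y hy z hz
        _ = (hYfin.toFinset.card : ℝ) * ((hZfin.toFinset.card : ℝ) * (Mn * Mm * (α ^ g.lS S x / α ^ R))) := by
            simp [Finset.sum_const, nsmul_eq_mul, mul_assoc]
        _ ≤ (Nm : ℝ) * ((Nn : ℝ) * (Mn * Mm * (α ^ g.lS S x / α ^ R))) := by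
            have hbnd0 : (0:ℝ) ≤ Mn * Mm * (α ^ g.lS S x / α ^ R) := by positivity
            have hin : (hZfin.toFinset.card : ℝ) * (Mn * Mm * (α ^ g.lS S x / α ^ R)) ≤ (Nn : ℝ) * (Mn * Mm * (α ^ g.lS S x / α ^ R)) :=
              mul_le_mul_of_nonneg_right hZc hbnd0
            exact mul_le_mul hYc hin (by positivity) (by positivity)
        _ = C * α ^ g.lS S x := by
            rw [hCdef]
            have hαR : α ^ R ≠ 0 := (pow_pos hα0 R).ne'
            field_simp
    exact le_of_eq_of_le (congrArg Norm.norm (congrFun (hco n m) x)) bound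
  refine ⟨hfund.coeff_meas n m, ⟨C, fun x => ?_⟩, ?_⟩
  · refine le_trans (key x) ?_
    calc C * α ^ g.lS S x ≤ C * 1 :=
          mul_le_mul_of_nonneg_left (pow_le_one₀ hα0' hα1') hC0
      _ = C := mul_one C
  · have hp0 : (0:ℝ) ≤ p := by linarith
    have hφ := hmem.2.2
    have hpt : ∀ x : G, ENNReal.ofReal (‖π.coeff (σ n) (σ m) x‖ ^ p) ≤
        ENNReal.ofReal (C ^ p) *
          ENNReal.ofReal (‖((α ^ g.lS S x : ℝ) : ℂ)‖ ^ p) := by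
      intro x
      have hnφ : ‖((α ^ g.lS S x : ℝ) : ℂ)‖ = α ^ g.lS S x := by
        rw [Complex.norm_real, Real.norm_eq_abs, abs_of_nonneg (pow_nonneg hα0' _)]
      rw [← ENNReal.ofReal_mul (Real.rpow_nonneg hC0 p)]
      refine ENNReal.ofReal_le_ofReal ?_
      rw [hnφ, ← Real.mul_rpow hC0 (pow_nonneg hα0' _)]
      exact Real.rpow_le_rpow (norm_nonneg _) (key x) hp0
    have hmono : g.fiberL μ (fun x => ENNReal.ofReal (‖π.coeff (σ n) (σ m) x‖ ^ p)) ≤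
        ENNReal.ofReal (C ^ p) *
          g.fiberL μ (fun x => ENNReal.ofReal (‖((α ^ g.lS S x : ℝ) : ℂ)‖ ^ p)) := by
      rw [EtaleGroupoid.fiberL, EtaleGroupoid.fiberL,
        ← MeasureTheory.lintegral_const_mul' _ _ ENNReal.ofReal_ne_top]
      refine MeasureTheory.lintegral_mono (fun u => ?_)
      rw [← ENNReal.tsum_mul_left]
      exact ENNReal.tsum_le_tsum (fun z => hpt _)
    exact ne_top_of_le_ne_top (ENNReal.mul_ne_top ENNReal.ofReal_ne_top hφ) hmono


end Statements
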